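/- Every countable concept class 𝒞 of measurable subsets of a probability space, with finite VC dimension d, is a uniform Glivenko–Cantelli class with respect to all probability measures, with sample complexity depending only on ε, δ, and d. -/

import Mathlib

set_option maxHeartbeats 1000000


open MeasureTheory Set

/-- Empirical measure of the set `C` on a sample `σ` of size `n`. -/
noncomputable def empMeas {Ω : Type*} (n : ℕ) (σ : Fin n → Ω) (C : Set Ω) : ℝ :=
  (Nat.card {i : Fin n // σ i ∈ C} : ℝ) / n

/-- `n₀` is a uniform Glivenko–Cantelli sample-complexity bound for the class `𝒞`
at accuracy `ε` and confidence `δ`, with respect to the family `P` of measures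
(outer probabilities are used for the possibly non-measurable event). -/
def GoodBound {Ω : Type*} [MeasurableSpace Ω] (P : Set (Measure Ω)) (ε δ : ℝ)
    (𝒞 : Set (Set Ω)) (n₀ : ℕ) : Prop :=
  ∀ n : ℕ, n₀ ≤ n → ∀ μ ∈ P,
    (Measure.pi fun _ : Fin n => μ)
      {σ : Fin n → Ω | ε ≤ ⨆ C ∈ 𝒞, |empMeas n σ C - (μ C).toReal|} ≤ ENNReal.ofReal δ

def Shatters {Ω : Type*} (𝒞 : Set (Set Ω)) (F : Finset Ω) : Prop :=
  ∀ T ⊆ F, ∃ C ∈ 𝒞, C ∩ (F : Set Ω) = (T : Set Ω)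

namespace VCP
open Finset


/-- real indicator -/
noncomputable def ind {Ω : Type*} (C : Set Ω) (x : Ω) : ℝ := C.indicator 1 x

lemma ind_nonneg {Ω : Type*} (C : Set Ω) (x : Ω) : 0 ≤ ind C x := by
  unfold ind; by_cases h : x ∈ C <;> simp [h]

lemma ind_le_one {Ω : Type*} (C : Set Ω) (x : Ω) : ind C x ≤ 1 := by
  unfold ind; by_cases h : x ∈ C <;> simp [h]

lemma abs_ind_sub_ind_le {Ω : Type*} (C : Set Ω) (x y : Ω) : |ind C x - ind C y| ≤ 1 := by
  rw [abs_le]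
  constructor <;> nlinarith [ind_nonneg C x, ind_nonneg C y, ind_le_one C x, ind_le_one C y]

lemma measurable_ind {Ω : Type*} [MeasurableSpace Ω] {C : Set Ω} (hC : MeasurableSet C) :
    Measurable (ind C) := measurable_const.indicator hC

lemma empMeas_eq_sum {Ω : Type*} (n : ℕ) (σ : Fin n → Ω) (C : Set Ω) :
    empMeas n σ C = (∑ i, ind C (σ i)) / n := by
  classical
  unfold empMeas
  congr 1
  rw [Nat.card_eq_fintype_card, Fintype.card_subtype, Finset.card_filter]
  push_cast
  refine Finset.sum_congr rfl fun i _ => ?_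
  by_cases h : σ i ∈ C <;> simp [h, ind]

lemma measurable_empMeas {Ω : Type*} [MeasurableSpace Ω] {C : Set Ω} (hC : MeasurableSet C)
    (n : ℕ) : Measurable (fun σ : Fin n → Ω => empMeas n σ C) := by
  simp only [empMeas_eq_sum]
  exact (Finset.measurable_sum _ fun i _ =>
    (measurable_ind hC).comp (measurable_pi_apply i)).div_const _

lemma abs_empMeas_le {Ω : Type*} (n : ℕ) (σ : Fin n → Ω) (C : Set Ω) :
    |empMeas n σ C| ≤ 1 := by
  rcases Nat.eq_zero_or_pos n with h | h
  · subst h; simp [empMeas]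
  rw [empMeas_eq_sum, abs_div, abs_of_nonneg (by positivity : (0:ℝ) ≤ (n:ℝ)),
    div_le_one (by positivity)]
  calc |∑ i, ind C (σ i)| ≤ ∑ i : Fin n, |ind C (σ i)| := Finset.abs_sum_le_sum_abs _ _
    _ ≤ ∑ _i : Fin n, (1:ℝ) := Finset.sum_le_sum fun i _ =>
        abs_le.2 ⟨by linarith [ind_nonneg C (σ i)], ind_le_one C (σ i)⟩
    _ = n := by simp

lemma map_eval_pi {ι : Type*} [Fintype ι] {Ω : Type*} [MeasurableSpace Ω] (μ : Measure Ω)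
    [IsProbabilityMeasure μ] (i : ι) :
    (Measure.pi fun _ : ι => μ).map (Function.eval i) = μ := by
  classical
  ext s hs
  rw [Measure.map_apply (measurable_pi_apply i) hs, Set.eval_preimage, Measure.pi_pi]
  rw [Finset.prod_eq_single i (fun j _ hj => by simp [Function.update_of_ne hj])
    (by simp)]
  simp

lemma integral_ind_eval {ι : Type*} [Fintype ι] {Ω : Type*} [MeasurableSpace Ω]
    (μ : Measure Ω) [IsProbabilityMeasure μ] (i : ι) {C : Set Ω} (hC : MeasurableSet C) :
    ∫ σ, ind C (σ i) ∂(Measure.pi fun _ : ι => μ) = (μ C).toReal := by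
  have h1 : ∫ σ, ind C (σ i) ∂(Measure.pi fun _ : ι => μ)
      = ∫ x, ind C x ∂((Measure.pi fun _ : ι => μ).map (Function.eval i)) :=
    (integral_map (measurable_pi_apply i).aemeasurable
      ((measurable_ind hC).aestronglyMeasurable)).symm
  rw [h1, map_eval_pi μ i]
  unfold ind
  rw [show (C.indicator (1 : Ω → ℝ)) = (C.indicator fun _ => (1:ℝ)) from rfl,
    integral_indicator_const (1:ℝ) hC]
  simp [Measure.real]

lemma integral_empMeas {Ω : Type*} [MeasurableSpace Ω] (μ : Measure Ω) [IsProbabilityMeasure μ]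
    {n : ℕ} (hn : n ≠ 0) {C : Set Ω} (hC : MeasurableSet C) :
    ∫ σ, empMeas n σ C ∂(Measure.pi fun _ : Fin n => μ) = (μ C).toReal := by
  simp only [empMeas_eq_sum]
  rw [integral_div, integral_finset_sum]
  · rw [Finset.sum_congr rfl fun (i : Fin n) _ => integral_ind_eval μ i hC]
    simp only [Finset.sum_const, Finset.card_univ, Fintype.card_fin, nsmul_eq_mul]
    field_simp
  · intro i _
    refine (integrable_const (1:ℝ)).mono' (((measurable_ind hC).comp
      (measurable_pi_apply i)).aestronglyMeasurable) (ae_of_all _ fun σ => ?_)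
    simp only [Function.comp, Real.norm_eq_abs]
    exact abs_le.2 ⟨by linarith [ind_nonneg C (σ i)], ind_le_one C (σ i)⟩



lemma sum_exp_sign_le {n : ℕ} (v : Fin n → ℝ) (hv : ∀ i, |v i| ≤ 1) (s : ℝ) :
    ∑ η : Fin n → Bool, Real.exp (s * ∑ i, (if η i then (-1:ℝ) else 1) * v i)
      ≤ 2^n * Real.exp (s^2*n/2) := by
  classical
  have key : ∀ η : Fin n → Bool, Real.exp (s * ∑ i, (if η i then (-1:ℝ) else 1) * v i)
      = ∏ i, Real.exp (s * ((if η i then (-1:ℝ) else 1) * v i)) := by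
    intro η; rw [← Real.exp_sum, Finset.mul_sum]
  simp_rw [key]
  have hps := Finset.prod_univ_sum (fun _ : Fin n => (Finset.univ : Finset Bool))
    (fun i b => Real.exp (s * ((if b then (-1:ℝ) else 1) * v i)))
  rw [Fintype.piFinset_univ] at hps
  rw [← hps]
  have hle : ∀ i : Fin n, ∑ b : Bool, Real.exp (s * ((if b then (-1:ℝ) else 1) * v i))
      ≤ 2 * Real.exp (s^2/2) := by
    intro i
    rw [Fintype.sum_bool]
    norm_num
    have h1 : Real.exp (-(s * v i)) + Real.exp (s * v i)
        = 2 * Real.cosh (s * v i) := by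
      rw [Real.cosh_eq]; ring
    rw [h1]
    have h2 : Real.cosh (s * v i) ≤ Real.exp ((s * v i)^2/2) := Real.cosh_le_exp_half_sq _
    have h3 : Real.exp ((s * v i)^2/2) ≤ Real.exp (s^2/2) := by
      apply Real.exp_le_exp.2
      have h4 := abs_le.1 (hv i)
      have hv2 : (v i)^2 ≤ 1 := by nlinarith [h4.1, h4.2]
      rw [mul_pow]
      nlinarith [sq_nonneg s]
    linarith [h2.trans h3]
  calc ∏ i : Fin n, ∑ b : Bool, Real.exp (s * ((if b then (-1:ℝ) else 1) * v i))
      ≤ ∏ _i : Fin n, (2 * Real.exp (s^2/2)) := by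
        apply Finset.prod_le_prod
        · intro i _
          apply Finset.sum_nonneg; intro b _; positivity
        · intro i _; exact hle i
    _ = 2^n * Real.exp (s^2*n/2) := by
        rw [Finset.prod_const]
        simp only [Finset.card_univ, Fintype.card_fin, mul_pow, ← Real.exp_nat_mul]
        ring_nf

lemma massart {n : ℕ} (hn : 1 ≤ n) {J : Type*} [Fintype J] [Nonempty J]
    (u : J → Fin n → ℝ) (hb : ∀ j i, |u j i| ≤ 1) {B : ℝ}
    (hB : ((Finset.univ.image u).card : ℝ) ≤ B) :
    (∑ η : Fin n → Bool,
        Finset.univ.sup' Finset.univ_nonempty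
          (fun j => |∑ i, (if η i then (-1:ℝ) else 1) * u j i|)) / 2^n
      ≤ Real.sqrt (2*n*Real.log (2*B)) := by
  classical
  set V : Finset (Fin n → ℝ) := Finset.univ.image u with hV
  have hVne : V.Nonempty := Finset.image_nonempty.2 Finset.univ_nonempty
  have hNB : (1:ℝ) ≤ B := le_trans (by exact_mod_cast hVne.card_pos) hB
  set L : ℝ := Real.log (2*B) with hLdef
  have hL : 0 < L := Real.log_pos (by linarith)
  have hn' : (0:ℝ) < n := by exact_mod_cast hn
  set t : ℝ := Real.sqrt (2*L/n) with htdef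
  have ht : 0 < t := Real.sqrt_pos.2 (by positivity)
  have ht2 : t^2 = 2*L/n := Real.sq_sqrt (by positivity)
  set M : (Fin n → Bool) → ℝ := fun η => Finset.univ.sup' Finset.univ_nonempty
    (fun j => |∑ i, (if η i then (-1:ℝ) else 1) * u j i|) with hM
  set S : ℝ := ∑ η : Fin n → Bool, M η with hS
  have h2n : (0:ℝ) < 2^n := by positivity
  -- step C : pointwise
  have stepC : ∀ η : Fin n → Bool, Real.exp (t * M η)
      ≤ ∑ v ∈ V, (Real.exp (t * ∑ i, (if η i then (-1:ℝ) else 1) * v i)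
          + Real.exp (-(t * ∑ i, (if η i then (-1:ℝ) else 1) * v i))) := by
    intro η
    obtain ⟨j₀, -, hj₀⟩ := Finset.exists_mem_eq_sup' Finset.univ_nonempty
      (fun j => |∑ i, (if η i then (-1:ℝ) else 1) * u j i|)
    have hmem : u j₀ ∈ V := Finset.mem_image_of_mem u (Finset.mem_univ j₀)
    have h1 : Real.exp (t * M η)
        ≤ Real.exp (t * ∑ i, (if η i then (-1:ℝ) else 1) * u j₀ i)
          + Real.exp (-(t * ∑ i, (if η i then (-1:ℝ) else 1) * u j₀ i)) := by
      rw [hM]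
      simp only []
      rw [hj₀]
      rcases abs_cases (∑ i, (if η i then (-1:ℝ) else 1) * u j₀ i) with ⟨h, -⟩ | ⟨h, -⟩
      · rw [h]
        exact le_add_of_nonneg_right (Real.exp_pos _).le
      · rw [h, mul_neg]
        exact le_add_of_nonneg_left (Real.exp_pos _).le
    have h5 : ∀ v ∈ V, 0 ≤ Real.exp (t * ∑ i, (if η i then (-1:ℝ) else 1) * v i)
        + Real.exp (-(t * ∑ i, (if η i then (-1:ℝ) else 1) * v i)) := by
      intro v _
      positivity
    exact h1.trans (Finset.single_le_sum h5 hmem)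
  -- step B : Jensen
  have card2 : ((Finset.univ : Finset (Fin n → Bool)).card : ℝ) = 2^n := by
    rw [Finset.card_univ, Fintype.card_fun]
    simp
  have stepB : Real.exp (t * (S / 2^n)) ≤ (∑ η : Fin n → Bool, Real.exp (t * M η)) / 2^n := by
    have hw : ∑ _η : Fin n → Bool, ((2:ℝ)^n)⁻¹ = 1 := by
      rw [Finset.sum_const, nsmul_eq_mul, card2]
      field_simp
    have hj := convexOn_exp.map_sum_le (t := (Finset.univ : Finset (Fin n → Bool)))
      (w := fun _ => ((2:ℝ)^n)⁻¹) (p := fun η => t * M η)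
      (fun _ _ => by positivity) hw (fun _ _ => Set.mem_univ _)
    simp only [smul_eq_mul] at hj
    have harg : ∑ η : Fin n → Bool, ((2:ℝ)^n)⁻¹ * (t * M η) = t * (S / 2^n) := by
      rw [← Finset.mul_sum, ← Finset.mul_sum]
      field_simp
      rfl
    have hrhs : ∑ η : Fin n → Bool, ((2:ℝ)^n)⁻¹ * Real.exp (t * M η)
        = (∑ η : Fin n → Bool, Real.exp (t * M η)) / 2^n := by
      rw [← Finset.mul_sum]
      field_simp
    rw [harg, hrhs] at hj
    exact hj
  -- step D
  have stepD : (∑ η : Fin n → Bool, Real.exp (t * M η)) / 2^n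
      ≤ 2*B*Real.exp (t^2*n/2) := by
    have h1 : ∑ η : Fin n → Bool, Real.exp (t * M η)
        ≤ ∑ η : Fin n → Bool, ∑ v ∈ V,
            (Real.exp (t * ∑ i, (if η i then (-1:ℝ) else 1) * v i)
              + Real.exp (-(t * ∑ i, (if η i then (-1:ℝ) else 1) * v i))) :=
      Finset.sum_le_sum fun η _ => stepC η
    rw [Finset.sum_comm] at h1
    have h2 : ∀ v ∈ V, ∑ η : Fin n → Bool,
        (Real.exp (t * ∑ i, (if η i then (-1:ℝ) else 1) * v i)
          + Real.exp (-(t * ∑ i, (if η i then (-1:ℝ) else 1) * v i)))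
        ≤ 2^n * (2 * Real.exp (t^2*n/2)) := by
      intro v hv
      have hv1 : ∀ i, |v i| ≤ 1 := by
        obtain ⟨j, -, rfl⟩ := Finset.mem_image.1 hv
        exact hb j
      rw [Finset.sum_add_distrib]
      have ha := sum_exp_sign_le v hv1 t
      have hc := sum_exp_sign_le v hv1 (-t)
      simp only [neg_mul, neg_sq] at hc
      linarith
    have h3 : ∑ v ∈ V, ((2:ℝ)^n * (2 * Real.exp (t^2*n/2)))
        = (V.card : ℝ) * (2^n * (2 * Real.exp (t^2*n/2))) := by
      rw [Finset.sum_const, nsmul_eq_mul]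
    have h4 : (∑ η : Fin n → Bool, Real.exp (t * M η))
        ≤ B * (2^n * (2 * Real.exp (t^2*n/2))) :=
      le_trans (h1.trans (Finset.sum_le_sum h2)) (by
        rw [h3]
        apply mul_le_mul_of_nonneg_right hB
        positivity)
    rw [div_le_iff₀ h2n]
    calc (∑ η : Fin n → Bool, Real.exp (t * M η)) ≤ B * (2^n * (2 * Real.exp (t^2*n/2))) := h4
      _ = 2*B*Real.exp (t^2*n/2) * 2^n := by ring
  -- combine
  have hexp : (2:ℝ)*B*Real.exp (t^2*n/2) = Real.exp (L + t^2*n/2) := by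
    rw [Real.exp_add, hLdef, Real.exp_log (by linarith)]
  have hfin : t * (S / 2^n) ≤ L + t^2*n/2 := by
    have := (stepB.trans stepD)
    rw [hexp] at this
    exact Real.exp_le_exp.1 this
  have ht2n : t^2*n/2 = L := by
    rw [ht2]; field_simp
  have hS2 : S / 2^n ≤ 2*L/t := by
    rw [le_div_iff₀ ht]
    calc S / 2^n * t = t * (S / 2^n) := by ring
      _ ≤ L + t^2*n/2 := hfin
      _ = 2*L := by rw [ht2n]; ring
  have hsqrt : 2*L/t = Real.sqrt (2*n*L) := by
    have hst : Real.sqrt (2*n*L) * t = 2*L := by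
      rw [htdef, ← Real.sqrt_mul (by positivity)]
      have : (2*n*L) * (2*L/n) = (2*L)^2 := by field_simp
      rw [this, Real.sqrt_sq (by positivity)]
    field_simp [ht.ne'] at hst ⊢
    linarith [hst]
  calc S / 2^n ≤ 2*L/t := hS2
    _ = Real.sqrt (2*n*L) := hsqrt



lemma card_powerset_filter_le {α : Type*} [DecidableEq α] (F : Finset α) :
    ∀ d : ℕ, ((F.powerset.filter fun S => S.card ≤ d).card) ≤ (F.card + 1)^d
  | 0 => by
    have hsub : F.powerset.filter (fun S => S.card ≤ 0) ⊆ {∅} := by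
      intro S hS
      simp only [Finset.mem_filter, Nat.le_zero, Finset.card_eq_zero] at hS
      simp [hS.2]
    calc (F.powerset.filter fun S => S.card ≤ 0).card ≤ ({∅} : Finset (Finset α)).card :=
          Finset.card_le_card hsub
      _ = 1 := rfl
      _ = (F.card + 1)^0 := by simp
  | (d+1) => by
    have hsub : F.powerset.filter (fun S => S.card ≤ d+1)
        ⊆ (F.powerset.filter (fun S => S.card ≤ d)) ∪ Finset.powersetCard (d+1) F := by
      intro S hS
      simp only [Finset.mem_filter, Finset.mem_powerset] at hS
      rcases Nat.lt_or_ge S.card (d+1) with h | h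
      · exact Finset.mem_union_left _ (Finset.mem_filter.2
          ⟨Finset.mem_powerset.2 hS.1, Nat.lt_succ_iff.1 h⟩)
      · exact Finset.mem_union_right _ (Finset.mem_powersetCard.2
          ⟨hS.1, le_antisymm hS.2 h⟩)
    have h1 : (F.powerset.filter (fun S => S.card ≤ d+1)).card
        ≤ (F.card + 1)^d + F.card.choose (d+1) := by
      calc (F.powerset.filter (fun S => S.card ≤ d+1)).card
          ≤ ((F.powerset.filter (fun S => S.card ≤ d)) ∪ Finset.powersetCard (d+1) F).card :=
            Finset.card_le_card hsub
        _ ≤ (F.powerset.filter (fun S => S.card ≤ d)).card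
              + (Finset.powersetCard (d+1) F).card := Finset.card_union_le _ _
        _ ≤ (F.card + 1)^d + F.card.choose (d+1) := by
            have := card_powerset_filter_le F d
            rw [Finset.card_powersetCard]
            omega
    have h2 : F.card.choose (d+1) ≤ F.card^(d+1) := Nat.choose_le_pow _ _
    have h3 : F.card^d ≤ (F.card+1)^d := Nat.pow_le_pow_left (Nat.le_succ _) d
    calc (F.powerset.filter (fun S => S.card ≤ d+1)).card
        ≤ (F.card + 1)^d + F.card.choose (d+1) := h1
      _ ≤ (F.card + 1)^(d+1) := by
          rw [pow_succ]
          have h4 : F.card^(d+1) ≤ (F.card+1)^d * F.card := by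
            rw [pow_succ]
            exact Nat.mul_le_mul_right _ h3
          nlinarith [h2, h4]

lemma image_card_le {Ω : Type*} {𝒞 : Set (Set Ω)} {d : ℕ}
    (hd : ∀ F : Finset Ω, Shatters 𝒞 F → F.card ≤ d)
    {ι : Type*} [Fintype ι] (τ : ι → Ω) {J : Type*} [Fintype J]
    (g : J → Set Ω) (hg : ∀ j, g j ∈ 𝒞) :
    (Finset.univ.image (fun j => fun k : ι => ind (g j) (τ k))).card
      ≤ (Fintype.card ι + 1)^d := by
  classical
  set F : Finset Ω := Finset.univ.image τ with hF
  set tr : J → Finset Ω := fun j => F.filter (· ∈ g j) with htr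
  set 𝒜 : Finset (Finset Ω) := Finset.univ.image tr with h𝒜
  -- step 1: factor through traces
  have hfac : (fun j : J => fun k : ι => ind (g j) (τ k))
      = (fun S : Finset Ω => fun k : ι => ind (↑S) (τ k)) ∘ tr := by
    funext j k
    have hmem : τ k ∈ F := Finset.mem_image_of_mem τ (Finset.mem_univ k)
    have : (τ k ∈ g j) ↔ (τ k ∈ tr j) := by
      rw [htr]
      simp [Finset.mem_filter, hmem]
    simp only [Function.comp, ind, Set.indicator_apply]
    by_cases h : τ k ∈ g j
    · rw [if_pos h, if_pos (by simpa using this.1 h)]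
    · rw [if_neg h, if_neg (by simpa using fun hc => h (this.2 (by simpa using hc)))]
  have step1 : (Finset.univ.image (fun j => fun k : ι => ind (g j) (τ k))).card ≤ 𝒜.card := by
    rw [hfac, ← Finset.image_image]
    exact Finset.card_image_le
  -- step 2 : Sauer-Shelah
  have step2 : 𝒜.card ≤ 𝒜.shatterer.card := Finset.card_le_card_shatterer 𝒜
  -- step 3 : shattered sets are small
  have step3 : 𝒜.shatterer ⊆ F.powerset.filter (fun S => S.card ≤ d) := by
    intro S hS
    rw [Finset.mem_shatterer] at hS
    have hSF : S ⊆ F := by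
      obtain ⟨A, hA, hSA⟩ := hS (Finset.Subset.refl S)
      obtain ⟨j, -, rfl⟩ := Finset.mem_image.1 hA
      calc S = S ∩ tr j := by rw [hSA]
        _ ⊆ tr j := Finset.inter_subset_right
        _ ⊆ F := Finset.filter_subset _ _
    have hshat : Shatters 𝒞 S := by
      intro T hT
      obtain ⟨A, hA, hSA⟩ := hS hT
      obtain ⟨j, -, rfl⟩ := Finset.mem_image.1 hA
      refine ⟨g j, hg j, ?_⟩
      ext x
      simp only [Set.mem_inter_iff, Finset.mem_coe]
      constructor
      · rintro ⟨hxg, hxS⟩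
        have hxF : x ∈ F := hSF hxS
        have : x ∈ S ∩ tr j := Finset.mem_inter.2 ⟨hxS, by
          rw [htr]; exact Finset.mem_filter.2 ⟨hxF, hxg⟩⟩
        rw [hSA] at this
        exact this
      · intro hxT
        have hxS : x ∈ S := hT hxT
        have : x ∈ S ∩ tr j := by rw [hSA]; exact hxT
        have := (Finset.mem_inter.1 this).2
        rw [htr] at this
        exact ⟨(Finset.mem_filter.1 this).2, hxS⟩
    exact Finset.mem_filter.2 ⟨Finset.mem_powerset.2 hSF, hd S hshat⟩
  have step4 : (F.powerset.filter (fun S => S.card ≤ d)).card ≤ (F.card + 1)^d :=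
    card_powerset_filter_le F d
  have hFcard : F.card ≤ Fintype.card ι := by
    calc F.card ≤ Finset.univ.card := Finset.card_image_le
      _ = Fintype.card ι := Finset.card_univ
  calc (Finset.univ.image (fun j => fun k : ι => ind (g j) (τ k))).card
      ≤ 𝒜.shatterer.card := step1.trans step2
    _ ≤ (F.powerset.filter (fun S => S.card ≤ d)).card := Finset.card_le_card step3
    _ ≤ (F.card + 1)^d := step4
    _ ≤ (Fintype.card ι + 1)^d := Nat.pow_le_pow_left (by omega) d


lemma abs_sup'_le {J : Type*} (s : Finset J) (hs : s.Nonempty) (f : J → ℝ) (b : ℝ)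
    (hb : ∀ j ∈ s, |f j| ≤ b) : |s.sup' hs f| ≤ b := by
  rw [abs_le]
  constructor
  · have h1 : f hs.choose ≤ s.sup' hs f := Finset.le_sup' f hs.choose_spec
    have h2 := (abs_le.1 (hb hs.choose hs.choose_spec)).1
    linarith
  · exact Finset.sup'_le _ _ fun j hj => (abs_le.1 (hb j hj)).2

lemma integrable_bdd {α : Type*} [MeasurableSpace α] {ν : Measure α} [IsFiniteMeasure ν]
    {f : α → ℝ} (hf : Measurable f) {b : ℝ} (hb : ∀ x, |f x| ≤ b) : Integrable f ν :=
  (integrable_const b).mono' hf.aestronglyMeasurable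
    (ae_of_all _ (by simpa [Real.norm_eq_abs] using hb))

def pperm {n : ℕ} (η : Fin n → Bool) : Fin n ⊕ Fin n → Fin n ⊕ Fin n :=
  fun k => match k with
  | .inl i => if η i then .inr i else .inl i
  | .inr i => if η i then .inl i else .inr i

lemma pperm_invol {n : ℕ} (η : Fin n → Bool) : Function.Involutive (pperm η) := by
  intro k
  cases k with
  | inl i => by_cases h : η i <;> simp [pperm, h]
  | inr i => by_cases h : η i <;> simp [pperm, h]

lemma measurePreserving_comp_perm {ι : Type*} [Fintype ι] {Ω : Type*} [MeasurableSpace Ω]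
    (μ : Measure Ω) [IsProbabilityMeasure μ] (e : ι → ι) (he : Function.Involutive e) :
    MeasurePreserving (fun τ : ι → Ω => τ ∘ e)
      (Measure.pi fun _ => μ) (Measure.pi fun _ => μ) := by
  have hmeas : Measurable (fun τ : ι → Ω => τ ∘ e) :=
    measurable_pi_lambda _ (fun k => measurable_pi_apply (e k))
  refine ⟨hmeas, ?_⟩
  have h : ∀ s : ι → Set Ω, (∀ k, MeasurableSet (s k)) →
      Measure.map (fun τ : ι → Ω => τ ∘ e) (Measure.pi fun _ => μ) (Set.univ.pi s)
        = ∏ k, μ (s k) := by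
    intro s hs
    rw [Measure.map_apply hmeas (MeasurableSet.univ_pi hs)]
    have hpre : (fun τ : ι → Ω => τ ∘ e) ⁻¹' (Set.univ.pi s)
        = Set.univ.pi (fun k => s (e k)) := by
      ext τ
      simp only [Set.mem_preimage, Set.mem_pi, Set.mem_univ, forall_true_left, Function.comp]
      constructor
      · intro h k
        have := h (e k)
        rwa [he k] at this
      · intro h k
        have := h (e k)
        rwa [he k] at this
    rw [hpre, Measure.pi_pi]
    exact Equiv.prod_comp (he.toPerm e) (fun k => μ (s k))
  exact (Measure.pi_eq h).symm

def permEquiv {ι : Type*} {Ω : Type*} [MeasurableSpace Ω] (e : ι → ι)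
    (he : Function.Involutive e) : (ι → Ω) ≃ᵐ (ι → Ω) where
  toEquiv := ⟨fun τ => τ ∘ e, fun τ => τ ∘ e,
    fun τ => funext fun k => congrArg τ (he k),
    fun τ => funext fun k => congrArg τ (he k)⟩
  measurable_toFun := measurable_pi_lambda _ (fun k => measurable_pi_apply (e k))
  measurable_invFun := measurable_pi_lambda _ (fun k => measurable_pi_apply (e k))

lemma integral_comp_perm {ι : Type*} [Fintype ι] {Ω : Type*} [MeasurableSpace Ω]
    (μ : Measure Ω) [IsProbabilityMeasure μ] (e : ι → ι) (he : Function.Involutive e)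
    (f : (ι → Ω) → ℝ) :
    ∫ τ, f (τ ∘ e) ∂(Measure.pi fun _ : ι => μ)
      = ∫ τ, f τ ∂(Measure.pi fun _ : ι => μ) := by
  have hmp : MeasurePreserving (permEquiv e he (Ω := Ω))
      (Measure.pi fun _ : ι => μ) (Measure.pi fun _ : ι => μ) :=
    ⟨(permEquiv e he).measurable, (measurePreserving_comp_perm μ e he).map_eq⟩
  exact hmp.integral_comp' f

lemma measurable_sup'_fun {δ J : Type*} [MeasurableSpace δ] (s : Finset J) (hs : s.Nonempty)
    (f : J → δ → ℝ) (hf : ∀ j, Measurable (f j)) :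
    Measurable fun x => s.sup' hs (fun j => f j x) := by
  have h := Finset.measurable_sup' hs (f := f) (fun j _ => hf j)
  have heq : (fun x => s.sup' hs fun j => f j x) = s.sup' hs f := by
    funext x; rw [Finset.sup'_apply]
  rwa [heq]

theorem core_bound {Ω : Type*} [MeasurableSpace Ω] (μ : Measure Ω) [IsProbabilityMeasure μ]
    {d n m : ℕ} (hn : 1 ≤ n) (g : Fin (m+1) → Set Ω) (hgm : ∀ j, MeasurableSet (g j))
    (hd : ∀ F : Finset Ω, Shatters (Set.range g) F → F.card ≤ d) :
    ∫ σ, (Finset.univ.sup' Finset.univ_nonempty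
        fun j => |empMeas n σ (g j) - (μ (g j)).toReal|) ∂(Measure.pi fun _ : Fin n => μ)
      ≤ Real.sqrt (2 * Real.log (2 * (2*(n:ℝ)+1)^d) / n) := by
  classical
  have hn0 : n ≠ 0 := by omega
  have hn' : (0:ℝ) < n := by exact_mod_cast Nat.pos_of_ne_zero hn0
  set π : Measure (Fin n → Ω) := Measure.pi fun _ : Fin n => μ with hπ
  set ℙ2 : Measure (Fin n ⊕ Fin n → Ω) := Measure.pi fun _ : Fin n ⊕ Fin n => μ with hℙ2
  have hJ : (Finset.univ : Finset (Fin (m+1))).Nonempty := Finset.univ_nonempty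
  -- basic bounds
  have htoReal : ∀ C : Set Ω, (μ C).toReal ≤ 1 := by
    intro C
    have h1 : μ C ≤ 1 := prob_le_one
    calc (μ C).toReal ≤ (1 : ENNReal).toReal := ENNReal.toReal_mono ENNReal.one_ne_top h1
      _ = 1 := by simp
  have htoReal0 : ∀ C : Set Ω, 0 ≤ (μ C).toReal := fun C => ENNReal.toReal_nonneg
  have habs : ∀ (σ : Fin n → Ω) (C : Set Ω), |empMeas n σ C - (μ C).toReal| ≤ 2 := by
    intro σ C
    have h1 := abs_empMeas_le n σ C
    have h2 := htoReal C
    have h3 := htoReal0 C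
    rw [abs_le] at h1 ⊢
    constructor <;> [linarith [h1.1]; linarith [h1.2]]
  have habs2 : ∀ (σ σ' : Fin n → Ω) (C : Set Ω), |empMeas n σ C - empMeas n σ' C| ≤ 2 := by
    intro σ σ' C
    have h1 := abs_le.1 (abs_empMeas_le n σ C)
    have h2 := abs_le.1 (abs_empMeas_le n σ' C)
    rw [abs_le]
    constructor <;> [linarith [h1.1, h2.2]; linarith [h1.2, h2.1]]
  -- the two main functions
  set G : (Fin n → Ω) → ℝ := fun σ => Finset.univ.sup' hJ
    fun j => |empMeas n σ (g j) - (μ (g j)).toReal| with hG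
  set D2 : ((Fin n → Ω) × (Fin n → Ω)) → ℝ := fun p => Finset.univ.sup' hJ
    fun j => |empMeas n p.1 (g j) - empMeas n p.2 (g j)| with hD2
  have hempmeas : ∀ j : Fin (m+1), Measurable (fun σ : Fin n → Ω => empMeas n σ (g j)) :=
    fun j => measurable_empMeas (hgm j) n
  have hempint : ∀ j : Fin (m+1), Integrable (fun σ : Fin n → Ω => empMeas n σ (g j)) π :=
    fun j => integrable_bdd (hempmeas j) (fun σ => abs_empMeas_le n σ (g j))
  have hGmeas : Measurable G :=
    measurable_sup'_fun _ hJ _ (fun j => ((hempmeas j).sub measurable_const).abs)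
  have hGbdd : ∀ σ, |G σ| ≤ 2 := fun σ =>
    abs_sup'_le _ hJ _ 2 (fun j _ => by rw [abs_abs]; exact habs σ (g j))
  have hGint : Integrable G π := integrable_bdd hGmeas hGbdd
  have hD2meas : Measurable D2 :=
    measurable_sup'_fun _ hJ _ (fun j =>
      (((hempmeas j).comp measurable_fst).sub ((hempmeas j).comp measurable_snd)).abs)
  have hD2bdd : ∀ p, |D2 p| ≤ 2 := fun p =>
    abs_sup'_le _ hJ _ 2 (fun j _ => by rw [abs_abs]; exact habs2 p.1 p.2 (g j))
  have hD2int : Integrable D2 (π.prod π) := integrable_bdd hD2meas hD2bdd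
  -- step 1 : ghost sample
  have hInner_meas : Measurable (fun σ => ∫ σ', D2 (σ, σ') ∂π) :=
    (hD2meas.stronglyMeasurable.integral_prod_right').measurable
  have hInner_bdd : ∀ σ, |∫ σ', D2 (σ, σ') ∂π| ≤ 2 := by
    intro σ
    have := norm_integral_le_of_norm_le_const (μ := π)
      (f := fun σ' => D2 (σ, σ')) (C := 2) (ae_of_all _ fun σ' => by
        rw [Real.norm_eq_abs]; exact hD2bdd _)
    simpa [Real.norm_eq_abs, measure_univ] using this
  have hInner_int : Integrable (fun σ => ∫ σ', D2 (σ, σ') ∂π) π :=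
    integrable_bdd hInner_meas hInner_bdd
  have step1 : ∫ σ, G σ ∂π ≤ ∫ p, D2 p ∂(π.prod π) := by
    have key : ∀ σ, G σ ≤ ∫ σ', D2 (σ, σ') ∂π := by
      intro σ
      apply Finset.sup'_le
      intro j _
      have h1 : empMeas n σ (g j) - (μ (g j)).toReal
          = ∫ σ', (empMeas n σ (g j) - empMeas n σ' (g j)) ∂π := by
        rw [integral_sub (integrable_const _) (hempint j), integral_const,
          integral_empMeas μ hn0 (hgm j)]
        simp [measure_univ]
      rw [h1]
      calc |∫ σ', (empMeas n σ (g j) - empMeas n σ' (g j)) ∂π|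
          ≤ ∫ σ', |empMeas n σ (g j) - empMeas n σ' (g j)| ∂π :=
            by
              simpa [Real.norm_eq_abs] using
                norm_integral_le_integral_norm (μ := π)
                  (f := fun σ' => empMeas n σ (g j) - empMeas n σ' (g j))
        _ ≤ ∫ σ', D2 (σ, σ') ∂π := by
            apply integral_mono
            · exact integrable_bdd (measurable_const.sub (hempmeas j)).abs
                (fun σ' => by rw [abs_abs]; exact habs2 σ σ' (g j))
            · exact integrable_bdd (hD2meas.comp measurable_prodMk_left)
                (fun σ' => hD2bdd _)
            · intro σ'
              exact Finset.le_sup' (fun j => |empMeas n σ (g j) - empMeas n σ' (g j)|)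
                (Finset.mem_univ j)
    calc ∫ σ, G σ ∂π ≤ ∫ σ, (∫ σ', D2 (σ, σ') ∂π) ∂π := integral_mono hGint hInner_int key
      _ = ∫ p, D2 p ∂(π.prod π) := (integral_prod D2 hD2int).symm

  -- step 2 : move to the double-sample space
  have hmp := measurePreserving_sumPiEquivProdPi (X := fun _ : Fin n ⊕ Fin n => Ω)
    (fun _ : Fin n ⊕ Fin n => μ)
  have step2 : ∫ p, D2 p ∂(π.prod π)
      = ∫ τ, D2 (fun i => τ (.inl i), fun i => τ (.inr i)) ∂ℙ2 := by
    rw [← hmp.integral_comp' D2]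
    rfl
  -- the symmetrized maximum
  set MM : (Fin n ⊕ Fin n → Ω) → ℝ := fun τ => Finset.univ.sup' hJ
    fun j => |∑ i : Fin n, (ind (g j) (τ (.inl i)) - ind (g j) (τ (.inr i)))| with hMM
  have hMMmeas : Measurable MM := measurable_sup'_fun _ hJ _ (fun j =>
    (Finset.measurable_sum _ fun i _ =>
      ((measurable_ind (hgm j)).comp (measurable_pi_apply _)).sub
        ((measurable_ind (hgm j)).comp (measurable_pi_apply _))).abs)
  have hMMbdd : ∀ τ, |MM τ| ≤ n := by
    intro τ
    refine abs_sup'_le _ hJ _ n (fun j _ => ?_)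
    rw [abs_abs]
    calc |∑ i : Fin n, (ind (g j) (τ (.inl i)) - ind (g j) (τ (.inr i)))|
        ≤ ∑ i : Fin n, |ind (g j) (τ (.inl i)) - ind (g j) (τ (.inr i))| :=
          Finset.abs_sum_le_sum_abs _ _
      _ ≤ ∑ _i : Fin n, (1:ℝ) := Finset.sum_le_sum fun i _ => abs_ind_sub_ind_le _ _ _
      _ = n := by simp
  have hMMint : Integrable MM ℙ2 := integrable_bdd hMMmeas hMMbdd
  -- step 3 : pointwise identity
  have step3 : ∀ τ : Fin n ⊕ Fin n → Ω,
      D2 (fun i => τ (.inl i), fun i => τ (.inr i)) = MM τ / n := by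
    intro τ
    have hj : ∀ j : Fin (m+1),
        |empMeas n (fun i => τ (.inl i)) (g j) - empMeas n (fun i => τ (.inr i)) (g j)|
          = |∑ i : Fin n, (ind (g j) (τ (.inl i)) - ind (g j) (τ (.inr i)))| / n := by
      intro j
      rw [empMeas_eq_sum, empMeas_eq_sum, div_sub_div_same, ← Finset.sum_sub_distrib,
        abs_div, abs_of_nonneg (le_of_lt hn')]
    calc D2 (fun i => τ (.inl i), fun i => τ (.inr i))
        = Finset.univ.sup' hJ (fun j =>
            |∑ i : Fin n, (ind (g j) (τ (.inl i)) - ind (g j) (τ (.inr i)))| / n) := by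
          rw [hD2]
          exact Finset.sup'_congr hJ rfl (fun j _ => hj j)
      _ = MM τ / n := by
          rw [hMM]
          exact (Finset.comp_sup'_eq_sup'_comp hJ (fun x : ℝ => x / n)
            (fun x y => (max_div_div_right (le_of_lt hn') x y).symm)).symm
  -- step 4 : averaging over sign swaps
  have hswap : ∀ η : Fin n → Bool, ∫ τ, MM (τ ∘ pperm η) ∂ℙ2 = ∫ τ, MM τ ∂ℙ2 :=
    fun η => integral_comp_perm μ (pperm η) (pperm_invol η) MM
  have hint : ∀ η : Fin n → Bool, Integrable (fun τ => MM (τ ∘ pperm η)) ℙ2 :=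
    fun η => integrable_bdd (hMMmeas.comp (measurable_pi_lambda _
      (fun k => measurable_pi_apply _))) (fun τ => hMMbdd _)
  have card2 : ((Finset.univ : Finset (Fin n → Bool)).card : ℝ) = 2^n := by
    rw [Finset.card_univ, Fintype.card_fun]
    simp
  have havg : ∫ τ, MM τ ∂ℙ2
      = ∫ τ, (∑ η : Fin n → Bool, MM (τ ∘ pperm η)) / 2^n ∂ℙ2 := by
    rw [integral_div, integral_finset_sum _ (fun η _ => hint η),
      Finset.sum_congr rfl (fun η _ => hswap η), Finset.sum_const, nsmul_eq_mul, card2]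
    have h2n : (2:ℝ)^n ≠ 0 := by positivity
    field_simp
  -- step 5 : pointwise Massart + Sauer bound
  set B : ℝ := (2*(n:ℝ)+1)^d with hB
  have hB1 : (1:ℝ) ≤ B := by
    rw [hB]
    refine one_le_pow₀ ?_
    have : (0:ℝ) ≤ n := hn'.le
    linarith
  have hpoint : ∀ τ : Fin n ⊕ Fin n → Ω, (∑ η : Fin n → Bool, MM (τ ∘ pperm η)) / 2^n
      ≤ Real.sqrt (2*n*Real.log (2*B)) := by
    intro τ
    set u : Fin (m+1) → Fin n → ℝ :=
      fun j i => ind (g j) (τ (.inl i)) - ind (g j) (τ (.inr i)) with hu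
    have hMMη : ∀ η : Fin n → Bool, MM (τ ∘ pperm η)
        = Finset.univ.sup' Finset.univ_nonempty
          (fun j => |∑ i : Fin n, (if η i then (-1:ℝ) else 1) * u j i|) := by
      intro η
      rw [hMM]
      refine Finset.sup'_congr hJ rfl (fun j _ => ?_)
      congr 1
      refine Finset.sum_congr rfl (fun i _ => ?_)
      by_cases h : η i <;> simp [pperm, Function.comp, h, hu] <;> ring
    have hub : ∀ j i, |u j i| ≤ 1 := fun j i => abs_ind_sub_ind_le _ _ _
    have hcard : ((Finset.univ.image u).card : ℝ) ≤ B := by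
      have h1 : (Finset.univ.image u).card
          ≤ (Finset.univ.image (fun j => fun k : Fin n ⊕ Fin n => ind (g j) (τ k))).card := by
        have hfac : u = (fun b : ((Fin n ⊕ Fin n) → ℝ) => fun i : Fin n => b (.inl i) - b (.inr i))
            ∘ (fun j => fun k => ind (g j) (τ k)) := rfl
        rw [hfac, ← Finset.image_image]
        exact Finset.card_image_le
      have h2 := image_card_le hd τ g (fun j => Set.mem_range_self j)
      have hι : Fintype.card (Fin n ⊕ Fin n) + 1 = 2*n+1 := by
        simp [Fintype.card_sum]
        omega
      calc ((Finset.univ.image u).card : ℝ)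
          ≤ (((2*n+1)^d : ℕ) : ℝ) := by
            have h3 := le_trans h1 h2
            rw [hι] at h3
            exact_mod_cast h3
        _ = B := by rw [hB]; push_cast; ring
    have hmas := massart hn u hub hcard
    simp_rw [hMMη]
    exact hmas
  have step5 : ∫ τ, MM τ ∂ℙ2 ≤ Real.sqrt (2*n*Real.log (2*B)) := by
    rw [havg]
    calc ∫ τ, (∑ η : Fin n → Bool, MM (τ ∘ pperm η)) / 2^n ∂ℙ2
        ≤ ∫ _τ, Real.sqrt (2*n*Real.log (2*B)) ∂ℙ2 := by
          refine integral_mono ?_ (integrable_const _) hpoint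
          exact (integrable_finset_sum _ (fun η _ => hint η)).div_const _
      _ = Real.sqrt (2*n*Real.log (2*B)) := by simp [measure_univ]
  -- final assembly
  have hfinal : ∫ σ, G σ ∂π ≤ Real.sqrt (2*n*Real.log (2*B)) / n := by
    calc ∫ σ, G σ ∂π ≤ ∫ p, D2 p ∂(π.prod π) := step1
      _ = ∫ τ, D2 (fun i => τ (.inl i), fun i => τ (.inr i)) ∂ℙ2 := step2
      _ = ∫ τ, MM τ / n ∂ℙ2 := by simp only [step3]
      _ = (∫ τ, MM τ ∂ℙ2) / n := integral_div _ _
      _ ≤ Real.sqrt (2*n*Real.log (2*B)) / n := by gcongr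
  have halg : Real.sqrt (2*(n:ℝ)*Real.log (2*B)) / n = Real.sqrt (2*Real.log (2*B)/n) := by
    have hL : 0 ≤ Real.log (2*B) := Real.log_nonneg (by linarith)
    rw [show 2*Real.log (2*B)/(n:ℝ) = (2*(n:ℝ)*Real.log (2*B))/((n:ℝ)^2) by
      field_simp]
    rw [Real.sqrt_div (by positivity) ((n:ℝ)^2), Real.sqrt_sq hn'.le]
  rw [← halg]
  exact hfinal


lemma tail_bound {Ω : Type*} [MeasurableSpace Ω] (μ : Measure Ω) [IsProbabilityMeasure μ]
    {d n m : ℕ} (hn : 1 ≤ n) (g : Fin (m+1) → Set Ω) (hgm : ∀ j, MeasurableSet (g j))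
    (hd : ∀ F : Finset Ω, Shatters (Set.range g) F → F.card ≤ d)
    {ε' δ : ℝ} (hε' : 0 < ε')
    (hsmall : Real.sqrt (2 * Real.log (2 * (2*(n:ℝ)+1)^d) / n) ≤ ε' * δ) :
    (Measure.pi fun _ : Fin n => μ)
      {σ : Fin n → Ω | ε' ≤ Finset.univ.sup' Finset.univ_nonempty
          fun j => |empMeas n σ (g j) - (μ (g j)).toReal|} ≤ ENNReal.ofReal δ := by
  set π : Measure (Fin n → Ω) := Measure.pi fun _ : Fin n => μ with hπ
  have hJ : (Finset.univ : Finset (Fin (m+1))).Nonempty := Finset.univ_nonempty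
  set G : (Fin n → Ω) → ℝ := fun σ => Finset.univ.sup' Finset.univ_nonempty
    fun j => |empMeas n σ (g j) - (μ (g j)).toReal| with hG
  have hGmeas : Measurable G := measurable_sup'_fun _ _ _
    (fun j => ((measurable_empMeas (hgm j) n).sub measurable_const).abs)
  have hGnonneg : ∀ σ, 0 ≤ G σ := by
    intro σ
    simp only [hG]
    exact le_trans (abs_nonneg _) (Finset.le_sup'
      (fun j => |empMeas n σ (g j) - (μ (g j)).toReal|) (Finset.mem_univ (0 : Fin (m+1))))
  have hGbdd : ∀ σ, |G σ| ≤ 2 := by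
    intro σ
    refine abs_sup'_le _ _ _ 2 (fun j _ => ?_)
    rw [abs_abs]
    have h1 := abs_le.1 (abs_empMeas_le n σ (g j))
    have h2 : (μ (g j)).toReal ≤ 1 := by
      calc (μ (g j)).toReal ≤ (1 : ENNReal).toReal :=
        ENNReal.toReal_mono ENNReal.one_ne_top prob_le_one
        _ = 1 := by simp
    have h3 : 0 ≤ (μ (g j)).toReal := ENNReal.toReal_nonneg
    rw [abs_le]
    constructor <;> [linarith [h1.1]; linarith [h1.2]]
  have hGint : Integrable G π := integrable_bdd hGmeas hGbdd
  have hmar := mul_meas_ge_le_integral_of_nonneg (μ := π) (f := G)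
    (ae_of_all _ hGnonneg) hGint ε'
  have hcore := core_bound μ hn g hgm hd
  have h2 : (π {x | ε' ≤ G x}).toReal ≤ δ := by
    have h3 : ε' * (π {x | ε' ≤ G x}).toReal ≤ ε' * δ := by
      calc ε' * (π {x | ε' ≤ G x}).toReal ≤ ∫ x, G x ∂π := hmar
        _ ≤ Real.sqrt (2 * Real.log (2 * (2*(n:ℝ)+1)^d) / n) := hcore
        _ ≤ ε' * δ := hsmall
    exact le_of_mul_le_mul_left h3 hε'
  have hne : π {x | ε' ≤ G x} ≠ ⊤ := measure_ne_top _ _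
  calc π {x | ε' ≤ G x} = ENNReal.ofReal ((π {x | ε' ≤ G x}).toReal) :=
      (ENNReal.ofReal_toReal hne).symm
    _ ≤ ENNReal.ofReal δ := ENNReal.ofReal_le_ofReal h2

lemma Q_of_bound {Ω : Type*} [MeasurableSpace Ω] (𝒞 : Set (Set Ω)) (d n : ℕ)
    (hcnt : 𝒞.Countable) (hmeas : ∀ C ∈ 𝒞, MeasurableSet C)
    (hvc : ∀ F : Finset Ω, Shatters 𝒞 F → F.card ≤ d)
    (ε δ : ℝ) (hε : 0 < ε) (hn : 1 ≤ n)
    (hsmall : Real.sqrt (2 * Real.log (2 * (2*(n:ℝ)+1)^d) / n) ≤ (ε/2) * δ)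
    (μ : Measure Ω) (hμ : IsProbabilityMeasure μ) :
    (Measure.pi fun _ : Fin n => μ)
      {σ : Fin n → Ω | ε ≤ ⨆ C ∈ 𝒞, |empMeas n σ C - (μ C).toReal|} ≤ ENNReal.ofReal δ := by
  classical
  rcases Set.eq_empty_or_nonempty 𝒞 with hemp | hne
  · subst hemp
    have hset : {σ : Fin n → Ω | ε ≤ ⨆ C ∈ (∅ : Set (Set Ω)), |empMeas n σ C - (μ C).toReal|}
        = ∅ := by
      ext σ
      have hzero : (⨆ C ∈ (∅ : Set (Set Ω)), |empMeas n σ C - (μ C).toReal|) = 0 := by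
        simp
      constructor
      · intro hσ
        rw [Set.mem_setOf_eq, hzero] at hσ
        linarith
      · intro h
        exact absurd h (Set.notMem_empty σ)
    rw [hset]
    simp
  obtain ⟨f, hf⟩ := hcnt.exists_eq_range hne
  set E : ℕ → Set (Fin n → Ω) := fun m =>
    {σ : Fin n → Ω | ε/2 ≤ Finset.univ.sup' Finset.univ_nonempty
      fun j : Fin (m+1) => |empMeas n σ (f j) - (μ (f j)).toReal|} with hE
  have hmono : Monotone E := by
    intro a b hab σ hσ
    rw [hE, Set.mem_setOf_eq] at hσ ⊢
    refine le_trans hσ (Finset.sup'_le _ _ fun j _ => ?_)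
    have h := Finset.le_sup'
      (f := fun j' : Fin (b+1) => |empMeas n σ (f ↑j') - (μ (f ↑j')).toReal|)
      (Finset.mem_univ (Fin.castLE (by omega) j))
    simpa [Fin.coe_castLE, -Finset.le_sup'_iff] using h
  have hsub : {σ : Fin n → Ω | ε ≤ ⨆ C ∈ 𝒞, |empMeas n σ C - (μ C).toReal|} ⊆ ⋃ m, E m := by
    intro σ hσ
    rw [Set.mem_setOf_eq] at hσ
    have hex : ∃ C ∈ 𝒞, ε/2 ≤ |empMeas n σ C - (μ C).toReal| := by
      by_contra hcon
      push_neg at hcon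
      have hle : (⨆ C ∈ 𝒞, |empMeas n σ C - (μ C).toReal|) ≤ ε/2 := by
        refine Real.iSup_le (fun C => ?_) (by linarith)
        exact Real.iSup_le (fun hC => (hcon C hC).le) (by linarith)
      linarith
    obtain ⟨C, hC, hge⟩ := hex
    rw [hf] at hC
    obtain ⟨k, rfl⟩ := hC
    refine Set.mem_iUnion.2 ⟨k, ?_⟩
    rw [hE, Set.mem_setOf_eq]
    refine le_trans hge ?_
    have h := Finset.le_sup'
      (f := fun j' : Fin (k+1) => |empMeas n σ (f ↑j') - (μ (f ↑j')).toReal|)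
      (Finset.mem_univ (Fin.last k))
    simpa [Fin.val_last, -Finset.le_sup'_iff] using h
  calc (Measure.pi fun _ : Fin n => μ)
        {σ : Fin n → Ω | ε ≤ ⨆ C ∈ 𝒞, |empMeas n σ C - (μ C).toReal|}
      ≤ (Measure.pi fun _ : Fin n => μ) (⋃ m, E m) := measure_mono hsub
    _ = ⨆ m, (Measure.pi fun _ : Fin n => μ) (E m) :=
        Directed.measure_iUnion (hmono.directed_le)
    _ ≤ ENNReal.ofReal δ := by
        refine iSup_le fun m => ?_
        have hgm : ∀ j : Fin (m+1), MeasurableSet (f ↑j) := by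
          intro j
          apply hmeas
          rw [hf]
          exact Set.mem_range_self _
        have hd : ∀ F : Finset Ω, Shatters (Set.range fun j : Fin (m+1) => f ↑j) F
            → F.card ≤ d := by
          intro F hF
          apply hvc
          intro T hT
          obtain ⟨C, hC, hCT⟩ := hF T hT
          refine ⟨C, ?_, hCT⟩
          obtain ⟨j, rfl⟩ := hC
          rw [hf]
          exact Set.mem_range_self _
        exact tail_bound μ hn (fun j : Fin (m+1) => f ↑j) hgm hd (by linarith) hsmall

open Filter in
lemma bound_tendsto (d : ℕ) :
    Filter.Tendsto (fun n : ℕ => Real.sqrt (2*Real.log (2*(2*(n:ℝ)+1)^d)/n))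
      Filter.atTop (nhds 0) := by
  have hlog : Filter.Tendsto (fun n : ℕ => Real.log n / n) Filter.atTop (nhds 0) :=
    (Real.isLittleO_log_id_atTop.tendsto_div_nhds_zero).comp tendsto_natCast_atTop_atTop
  have hconst : ∀ c : ℝ, Filter.Tendsto (fun n : ℕ => c / n) Filter.atTop (nhds 0) :=
    fun c => tendsto_const_div_atTop_nhds_zero_nat c
  have h21 : Filter.Tendsto (fun n : ℕ => Real.log (2*(n:ℝ)+1) / n) Filter.atTop (nhds 0) := by
    have hup : Filter.Tendsto (fun n : ℕ => Real.log 3 / n + Real.log n / n)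
        Filter.atTop (nhds 0) := by
      have := (hconst (Real.log 3)).add hlog
      simpa using this
    refine squeeze_zero' ?_ ?_ hup
    · filter_upwards [Filter.eventually_ge_atTop 1] with n hn
      have hn' : (1:ℝ) ≤ n := by exact_mod_cast hn
      have h0 : (1:ℝ) ≤ 2*n+1 := by linarith
      have := Real.log_nonneg h0
      positivity
    · filter_upwards [Filter.eventually_ge_atTop 1] with n hn
      have hn' : (1:ℝ) ≤ n := by exact_mod_cast hn
      have hpos : (0:ℝ) < n := by linarith
      have h1 : Real.log (2*(n:ℝ)+1) ≤ Real.log (3*n) :=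
        Real.log_le_log (by linarith) (by linarith)
      have h2 : Real.log (3*(n:ℝ)) = Real.log 3 + Real.log n :=
        Real.log_mul (by norm_num) (by linarith)
      calc Real.log (2*(n:ℝ)+1)/n ≤ (Real.log 3 + Real.log n)/n :=
            div_le_div_of_nonneg_right (h2 ▸ h1) hpos.le
        _ = Real.log 3/n + Real.log n/n := add_div _ _ _
  have hmain : Filter.Tendsto (fun n : ℕ => 2*Real.log (2*(2*(n:ℝ)+1)^d)/n)
      Filter.atTop (nhds 0) := by
    have hcomb : Filter.Tendsto
        (fun n : ℕ => 2*Real.log 2/(n:ℝ) + 2*(d:ℝ)*(Real.log (2*(n:ℝ)+1)/n))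
        Filter.atTop (nhds 0) := by
      have := (hconst (2*Real.log 2)).add (h21.const_mul (2*(d:ℝ)))
      simpa using this
    refine Filter.Tendsto.congr' ?_ hcomb
    filter_upwards [Filter.eventually_ge_atTop 1] with n hn
    have hn' : (1:ℝ) ≤ n := by exact_mod_cast hn
    have hpos : (0:ℝ) < 2*(n:ℝ)+1 := by linarith
    have hn0 : (n:ℝ) ≠ 0 := by linarith
    have hlogmul : Real.log (2*(2*(n:ℝ)+1)^d) = Real.log 2 + d*Real.log (2*(n:ℝ)+1) := by
      rw [Real.log_mul (by norm_num) (by positivity), Real.log_pow]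
    rw [hlogmul]
    field_simp
  have hcomp := hmain.sqrt
  simpa using hcomp

lemma exists_n0 (ε δ : ℝ) (hε : 0 < ε) (hδ : 0 < δ) (d : ℕ) :
    ∃ n₀ : ℕ, ∀ n, n₀ ≤ n → 1 ≤ n ∧
      Real.sqrt (2*Real.log (2*(2*(n:ℝ)+1)^d)/n) ≤ ε/2*δ := by
  have hpos : (0:ℝ) < ε/2*δ := by positivity
  have h1 := (bound_tendsto d).eventually (eventually_le_nhds hpos)
  have h2 := h1.and (Filter.eventually_ge_atTop 1)
  obtain ⟨n₀, hn₀⟩ := Filter.eventually_atTop.1 h2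
  exact ⟨n₀, fun n hn => ⟨(hn₀ n hn).2, (hn₀ n hn).1⟩⟩

end VCP


/-- there is a sample-complexity function depending only on `ε`, `δ`
and `d` such that every countable concept class of measurable sets with VC dimension
at most `d` is uniform Glivenko–Cantelli, over all probability measures, with that
sample complexity. -/
theorem countable_vc_class_ugc :
    ∃ s : ℝ → ℝ → ℕ → ℕ,
      ∀ (Ω : Type) (_ : MeasurableSpace Ω) (𝒞 : Set (Set Ω)) (d : ℕ),
        𝒞.Countable → (∀ C ∈ 𝒞, MeasurableSet C) →
        (∀ F : Finset Ω, Shatters 𝒞 F → F.card ≤ d) →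
        ∀ ε : ℝ, 0 < ε → ∀ δ : ℝ, 0 < δ → ∀ n : ℕ, s ε δ d ≤ n →
          ∀ μ : Measure Ω, IsProbabilityMeasure μ →
            (Measure.pi fun _ : Fin n => μ)
              {σ : Fin n → Ω | ε ≤ ⨆ C ∈ 𝒞, |empMeas n σ C - (μ C).toReal|} ≤
              ENNReal.ofReal δ := by
  classical
  refine ⟨fun ε δ d => if h : ∃ n₀ : ℕ, ∀ n, n₀ ≤ n → 1 ≤ n ∧
      Real.sqrt (2*Real.log (2*(2*(n:ℝ)+1)^d)/n) ≤ ε/2*δ then h.choose else 0, ?_⟩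
  intro Ω _inst 𝒞 d hcnt hmeas hvc ε hε δ hδ n hn μ hμ
  have hex := VCP.exists_n0 ε δ hε hδ d
  simp only [dif_pos hex] at hn
  obtain ⟨h1, h2⟩ := hex.choose_spec n hn
  exact VCP.Q_of_bound 𝒞 d n hcnt hmeas hvc ε δ hε h1 h2 μ hμ
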